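/- arXiv:1708.08762 — 2 statements merged into one kernel-verified Lean document; each statement's English description precedes it below -/
import Mathlib

section
/- Let 0 < p < ∞, let F be analytic on Ω₊, and let 0 < τ₁ < τ₂ and M₁ > 0 satisfy sup_{τ∈[τ₁,τ₂]} ∫_Γ |F(ζ + iτ)|^p |dζ| ≤ M₁. Then for any fixed δ with 0 < δ < (τ₂ − τ₁)/2, F(ζ(u) + iτ) → 0 uniformly for τ ∈ [τ₁ + δ, τ₂ − δ] as |u| → ∞; that is, for every ε > 0 there is R > 0 such that |F(ζ(u) + iτ)| < ε whenever |u| ≥ R and τ₁ + δ ≤ τ ≤ τ₂ − δ. -/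
open Complex MeasureTheory Filter Set
open scoped ENNReal Real Topology BigOperators

noncomputable section

/-- The boundary curve `ζ(u) = u + i·a(u)`. -/
def zetaC (a : ℝ → ℝ) (u : ℝ) : ℂ := (u : ℂ) + (a u : ℂ) * Complex.I

/-- The Lipschitz domain above the curve: `Ω₊ = {u + iv : v > a(u)}`. -/
def OmegaP (a : ℝ → ℝ) : Set ℂ := {w : ℂ | a w.re < w.im}

/-- The domain below the curve: `Ω₋ = {u + iv : v < a(u)}`. -/
def OmegaM (a : ℝ → ℝ) : Set ℂ := {w : ℂ | w.im < a w.re}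

/-- Arc-length density `√(1 + a′(u)²)`. -/
def arcDen (a : ℝ → ℝ) (u : ℝ) : ℝ := Real.sqrt (1 + (deriv a u) ^ 2)

/-- `∫_Γ |F(ζ + iτ)|^p |dζ|`, as an extended nonnegative real. -/
def bdryInt (a : ℝ → ℝ) (p : ℝ) (F : ℂ → ℂ) (τ : ℝ) : ℝ≥0∞ :=
  ∫⁻ u : ℝ, ENNReal.ofReal (‖F (zetaC a u + (τ : ℂ) * Complex.I)‖ ^ p * arcDen a u)

/-- `‖F‖_{H^p(Ω₊)}^p = sup_{τ>0} ∫_Γ |F(ζ + iτ)|^p |dζ|`. -/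
def HpPow (a : ℝ → ℝ) (p : ℝ) (F : ℂ → ℂ) : ℝ≥0∞ :=
  ⨆ (τ : ℝ) (_ : 0 < τ), bdryInt a p F τ

/-- `‖F‖_{H^p(Ω₊)}`. -/
def HpNorm (a : ℝ → ℝ) (p : ℝ) (F : ℂ → ℂ) : ℝ≥0∞ := HpPow a p F ^ (1 / p)

/-- Membership in the Hardy space `H^p(Ω₊)`. -/
def MemHp (a : ℝ → ℝ) (p : ℝ) (F : ℂ → ℂ) : Prop :=
  DifferentiableOn ℂ F (OmegaP a) ∧ HpPow a p F < ⊤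

/-- The upper half-plane `ℂ₊`. -/
def UHP : Set ℂ := {z : ℂ | 0 < z.im}

/-- `∫_ℝ |f(x + iy)|^p dx`. -/
def planeInt (p : ℝ) (f : ℂ → ℂ) (y : ℝ) : ℝ≥0∞ :=
  ∫⁻ x : ℝ, ENNReal.ofReal (‖f ((x : ℂ) + (y : ℂ) * Complex.I)‖ ^ p)

/-- `‖f‖_{H^p(ℂ₊)}^p`. -/
def HpPowU (p : ℝ) (f : ℂ → ℂ) : ℝ≥0∞ := ⨆ (y : ℝ) (_ : 0 < y), planeInt p f y

/-- `‖f‖_{H^p(ℂ₊)}`. -/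
def HpNormU (p : ℝ) (f : ℂ → ℂ) : ℝ≥0∞ := HpPowU p f ^ (1 / p)

/-- Membership in the classical Hardy space `H^p(ℂ₊)`. -/
def MemHpU (p : ℝ) (f : ℂ → ℂ) : Prop :=
  DifferentiableOn ℂ f UHP ∧ HpPowU p f < ⊤

/-- The transform `TF(z) = F(Φ(z))·(Φ′(z))^{1/p}`, where `(Φ′)^{1/p} := exp(L/p)`
for a holomorphic branch `L` of `log Φ′`. -/
def Tmap (p : ℝ) (Φ L F : ℂ → ℂ) : ℂ → ℂ :=
  fun z => F (Φ z) * Complex.exp (L z / (p : ℂ))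

/-- The angle `φ₀` with `ζ′(u₀) = |ζ′(u₀)|·e^{iφ₀}`, `ζ′(u₀) = 1 + i·a′(u₀)`. -/
def phi0 (a : ℝ → ℝ) (u₀ : ℝ) : ℝ := Complex.arg (1 + Complex.I * Complex.ofReal (deriv a u₀))

/-- The nontangential approach region `Ω_φ(ζ₀)`. -/
def OmegaSector (a : ℝ → ℝ) (u₀ : ℝ) (φ : ℝ) : Set ℂ :=
  {w : ℂ | ∃ r θ : ℝ, 0 < r ∧ φ < θ - phi0 a u₀ ∧ θ - phi0 a u₀ < Real.pi - φ ∧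
    w = zetaC a u₀ + (r : ℂ) * Complex.exp ((θ : ℂ) * Complex.I)}

/-- `F` has nontangential boundary limit `l` at `ζ(u₀)`. -/
def HasNTLimit (a : ℝ → ℝ) (F : ℂ → ℂ) (u₀ : ℝ) (l : ℂ) : Prop :=
  ∀ φ ∈ Set.Ioo (0 : ℝ) (Real.pi / 2),
    Filter.Tendsto F (nhdsWithin (zetaC a u₀) (OmegaSector a u₀ φ ∩ OmegaP a)) (nhds l)

/-- The kernel `K_z(ζ, ζ₀) = (1/(πi)) · z/((ζ − ζ₀)² − z²)`. -/
def Kker (z ζ ζ₀ : ℂ) : ℂ :=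
  (1 / ((Real.pi : ℂ) * Complex.I)) * (z / ((ζ - ζ₀) ^ 2 - z ^ 2))

end


open Metric
noncomputable section

/-- Circle sub-mean value inequality for analytic functions. -/
lemma circle_mean_ineq (F : ℂ → ℂ) (c : ℂ) (r : ℝ) (hr : 0 < r)
    (hc : ContinuousOn F (closedBall c r))
    (hd : ∀ z ∈ ball c r, DifferentiableAt ℂ F z) :
    2 * Real.pi * ‖F c‖ ≤ ∫ θ in (0:ℝ)..(2 * Real.pi), ‖F (circleMap c r θ)‖ := by
  have key := Complex.circleIntegral_sub_center_inv_smul_of_differentiable_on_off_countable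
    hr Set.countable_empty hc (fun z hz => hd z hz.1)
  have h1 : ‖(2 * Real.pi * Complex.I : ℂ) • F c‖ = 2 * Real.pi * ‖F c‖ := by
    rw [norm_smul]
    congr 1
    simp [norm_mul, Complex.norm_I, Complex.norm_real,
      _root_.abs_of_nonneg Real.pi_pos.le]
  have h2 : ‖∮ z in C(c, r), (z - c)⁻¹ • F z‖ ≤
      ∫ θ in (0:ℝ)..(2 * Real.pi), ‖F (circleMap c r θ)‖ := by
    have h2' := intervalIntegral.norm_integral_le_integral_norm (μ := volume)
      (f := fun θ => deriv (circleMap c r) θ • (circleMap c r θ - c)⁻¹ • F (circleMap c r θ))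
      (a := 0) (b := 2*Real.pi) (by positivity)
    rw [circleIntegral]
    refine le_trans h2' (le_of_eq ?_)
    refine intervalIntegral.integral_congr fun θ _ => ?_
    rw [deriv_circleMap]
    simp only [norm_smul, norm_mul, norm_circleMap_zero, Complex.norm_I,
      mul_one, norm_inv, circleMap_sub_center]
    rw [abs_of_pos hr]
    field_simp
  calc 2 * Real.pi * ‖F c‖ = ‖(2 * Real.pi * Complex.I : ℂ) • F c‖ := h1.symm
    _ = ‖∮ z in C(c, r), (z - c)⁻¹ • F z‖ := by rw [key]
    _ ≤ _ := h2

end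

noncomputable section

/-- Area sub-mean value inequality for analytic functions. -/
lemma area_mean_ineq (F : ℂ → ℂ) (c : ℂ) (R : ℝ) (hR : 0 < R)
    (hc : ContinuousOn F (closedBall c R))
    (hd : ∀ z ∈ ball c R, DifferentiableAt ℂ F z) :
    ‖F c‖ * (Real.pi * R ^ 2) ≤ ∫ w in ball c R, ‖F w‖ := by
  set g : ℂ → ℝ := (ball (0:ℂ) R).indicator (fun w => ‖F (c + w)‖) with hg
  set H : ℝ × ℝ → ℝ := fun p => p.1 * ‖F (circleMap c p.1 p.2)‖ with hH
  set rect : Set (ℝ × ℝ) := Ioo (0:ℝ) R ×ˢ Ioo (-Real.pi) Real.pi with hrect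
  -- `∫ g = ∫_{ball c R} ‖F‖`
  have h1 : ∫ w, g w = ∫ w in ball c R, ‖F w‖ := by
    have hiff : ∀ w : ℂ, w ∈ ball (0:ℂ) R ↔ c + w ∈ ball c R := by
      intro w; simp [Metric.mem_ball, dist_eq_norm, add_sub_cancel_left]
    calc ∫ w, g w = ∫ w, (ball c R).indicator (fun v => ‖F v‖) (c + w) := by
          refine integral_congr_ae (Eventually.of_forall fun w => ?_)
          by_cases hw : w ∈ ball (0:ℂ) R
          · rw [hg, Set.indicator_of_mem hw]
            exact (Set.indicator_of_mem ((hiff w).mp hw) (fun v => ‖F v‖)).symm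
          · rw [hg, Set.indicator_of_notMem hw]
            exact (Set.indicator_of_notMem (fun h => hw ((hiff w).mpr h)) (fun v => ‖F v‖)).symm
      _ = ∫ v, (ball c R).indicator (fun v => ‖F v‖) v :=
          integral_add_left_eq_self _ c
      _ = ∫ w in ball c R, ‖F w‖ := integral_indicator measurableSet_ball
  -- polar coordinates
  have h2 : ∫ w, g w = ∫ p in polarCoord.target, p.1 • g (Complex.polarCoord.symm p) :=
    (Complex.integral_comp_polarCoord_symm g).symm
  have hsymm : ∀ p : ℝ × ℝ, c + Complex.polarCoord.symm p = circleMap c p.1 p.2 := by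
    intro p
    rw [Complex.polarCoord_symm_apply]
    simp [circleMap, Complex.exp_mul_I]
  have hrectT : rect ⊆ polarCoord.target := by
    rw [polarCoord_target]
    exact Set.prod_mono Ioo_subset_Ioi_self subset_rfl
  have hrectmeas : MeasurableSet rect := measurableSet_Ioo.prod measurableSet_Ioo
  have h3 : ∫ p in polarCoord.target, p.1 • g (Complex.polarCoord.symm p)
      = ∫ p in rect, H p := by
    rw [polarCoord_target]
    have : ∀ p ∈ Ioi (0:ℝ) ×ˢ Ioo (-Real.pi) Real.pi,
        p.1 • g (Complex.polarCoord.symm p) = rect.indicator H p := by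
      rintro ⟨r, θ⟩ ⟨hr, hθ⟩
      simp only [smul_eq_mul, hg]
      by_cases hrR : r < R
      · have hmem : Complex.polarCoord.symm (r, θ) ∈ ball (0:ℂ) R := by
          rw [mem_ball_zero_iff, Complex.norm_polarCoord_symm]
          simpa [abs_of_pos (mem_Ioi.mp hr)] using hrR
        have hmem2 : (r, θ) ∈ rect := ⟨⟨mem_Ioi.mp hr, hrR⟩, hθ⟩
        rw [Set.indicator_of_mem hmem, Set.indicator_of_mem hmem2, hH]
        simp only []
        rw [hsymm (r, θ)]
      · have hmem : Complex.polarCoord.symm (r, θ) ∉ ball (0:ℂ) R := by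
          rw [mem_ball_zero_iff, Complex.norm_polarCoord_symm]
          simp only [not_lt] at hrR ⊢
          rwa [abs_of_pos (mem_Ioi.mp hr)]
        have hmem2 : (r, θ) ∉ rect := fun h => hrR h.1.2
        rw [Set.indicator_of_notMem hmem, Set.indicator_of_notMem hmem2, mul_zero]
    rw [setIntegral_congr_fun (measurableSet_Ioi.prod measurableSet_Ioo) this,
      setIntegral_indicator hrectmeas,
      Set.inter_eq_self_of_subset_right (by rw [← polarCoord_target] at *; exact hrectT)]
  -- integrability of `H` on `rect`
  have hcm : Continuous (fun p : ℝ × ℝ => circleMap c p.1 p.2) := by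
    simp only [circleMap]
    fun_prop
  have hHK : ContinuousOn H (Icc (0:ℝ) R ×ˢ Icc (-Real.pi) Real.pi) := by
    apply (continuous_fst.continuousOn).mul
    apply ContinuousOn.norm
    apply hc.comp hcm.continuousOn
    rintro ⟨r, θ⟩ ⟨hr, _⟩
    simp only [mem_closedBall, dist_eq_norm, circleMap_sub_center,
      norm_circleMap_zero]
    rw [_root_.abs_of_nonneg (show (0:ℝ) ≤ r from hr.1)]
    exact hr.2
  have hHint : IntegrableOn H rect := by
    apply (hHK.integrableOn_compact (isCompact_Icc.prod isCompact_Icc)).mono_set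
    exact Set.prod_mono Ioo_subset_Icc_self Ioo_subset_Icc_self
  have h5 : ∫ p in rect, H p
      = ∫ r in Ioo (0:ℝ) R, ∫ θ in Ioo (-Real.pi) Real.pi, H (r, θ) :=
    MeasureTheory.setIntegral_prod H hHint
  -- inner bound
  have h6 : ∀ r ∈ Ioo (0:ℝ) R,
      2 * Real.pi * ‖F c‖ * r ≤ ∫ θ in Ioo (-Real.pi) Real.pi, H (r, θ) := by
    rintro r ⟨hr0, hrR⟩
    have hper : Function.Periodic (fun θ : ℝ => ‖F (circleMap c r θ)‖) (2 * Real.pi) :=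
      fun x => congrArg (fun z => ‖F z‖) (periodic_circleMap c r x)
    have e1 : ∫ θ in Ioo (-Real.pi) Real.pi, H (r, θ)
        = r * ∫ θ in Ioo (-Real.pi) Real.pi, ‖F (circleMap c r θ)‖ := by
      simp only [hH]
      exact MeasureTheory.integral_const_mul r _
    have e2 : ∫ θ in Ioo (-Real.pi) Real.pi, ‖F (circleMap c r θ)‖
        = ∫ θ in (0:ℝ)..(2 * Real.pi), ‖F (circleMap c r θ)‖ := by
      have e2' := hper.intervalIntegral_add_eq (-Real.pi) 0
      rw [show -Real.pi + 2 * Real.pi = Real.pi by ring, zero_add] at e2'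
      rw [← MeasureTheory.integral_Ioc_eq_integral_Ioo,
        ← intervalIntegral.integral_of_le (by linarith [Real.pi_pos]), e2']
    have e3 : 2 * Real.pi * ‖F c‖ ≤ ∫ θ in (0:ℝ)..(2 * Real.pi), ‖F (circleMap c r θ)‖ :=
      circle_mean_ineq F c r hr0
        (hc.mono (closedBall_subset_closedBall hrR.le))
        (fun z hz => hd z (ball_subset_ball hrR.le hz))
    rw [e1, e2]
    calc 2 * Real.pi * ‖F c‖ * r = r * (2 * Real.pi * ‖F c‖) := by ring
      _ ≤ r * ∫ θ in (0:ℝ)..(2 * Real.pi), ‖F (circleMap c r θ)‖ :=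
          mul_le_mul_of_nonneg_left e3 hr0.le
  -- outer bound
  have h7 : ∫ r in Ioo (0:ℝ) R, 2 * Real.pi * ‖F c‖ * r
      ≤ ∫ r in Ioo (0:ℝ) R, ∫ θ in Ioo (-Real.pi) Real.pi, H (r, θ) := by
    refine setIntegral_mono_on ?_ ?_ measurableSet_Ioo h6
    · exact ((continuous_const.mul continuous_id).integrableOn_Icc).mono_set Ioo_subset_Icc_self
    · have hmeq : (volume.restrict (Ioo (0:ℝ) R)).prod
          (volume.restrict (Ioo (-Real.pi) Real.pi))
          = (volume : Measure (ℝ × ℝ)).restrict (Ioo (0:ℝ) R ×ˢ Ioo (-Real.pi) Real.pi) := by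
        rw [Measure.prod_restrict, ← Measure.volume_eq_prod]
      have hHint2 : Integrable H ((volume.restrict (Ioo (0:ℝ) R)).prod
          (volume.restrict (Ioo (-Real.pi) Real.pi))) := by
        rw [hmeq]; exact hHint
      exact hHint2.integral_prod_left
  have h8 : ∫ r in Ioo (0:ℝ) R, 2 * Real.pi * ‖F c‖ * r = ‖F c‖ * (Real.pi * R ^ 2) := by
    rw [MeasureTheory.integral_const_mul (2 * Real.pi * ‖F c‖) (fun r : ℝ => r)]
    rw [← MeasureTheory.integral_Ioc_eq_integral_Ioo,
      ← intervalIntegral.integral_of_le hR.le, integral_id]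
    ring
  calc ‖F c‖ * (Real.pi * R ^ 2) = ∫ r in Ioo (0:ℝ) R, 2 * Real.pi * ‖F c‖ * r := h8.symm
    _ ≤ ∫ r in Ioo (0:ℝ) R, ∫ θ in Ioo (-Real.pi) Real.pi, H (r, θ) := h7
    _ = ∫ p in rect, H p := h5.symm
    _ = ∫ p in polarCoord.target, p.1 • g (Complex.polarCoord.symm p) := h3.symm
    _ = ∫ w, g w := h2.symm
    _ = ∫ w in ball c R, ‖F w‖ := h1

end

noncomputable section

lemma volume_ball_toReal (c : ℂ) (R : ℝ) (hR : 0 < R) :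
    (volume (ball c R)).toReal = Real.pi * R ^ 2 := by
  rw [Complex.volume_ball]
  rw [ENNReal.toReal_mul, ENNReal.toReal_pow, ENNReal.toReal_ofReal hR.le]
  simp [mul_comm]

lemma submean_pow (p R : ℝ) (hp : 0 < p) (hR : 0 < R) :
    ∃ C : ℝ, 0 < C ∧ ∀ (F : ℂ → ℂ) (c : ℂ),
      ContinuousOn F (closedBall c R) → (∀ z ∈ ball c R, DifferentiableAt ℂ F z) →
      ‖F c‖ ^ p ≤ C * ∫ w in ball c R, ‖F w‖ ^ p := by
  have hπR : 0 < Real.pi * R ^ 2 := by positivity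
  rcases le_or_gt 1 p with hp1 | hp1
  · -- case `p ≥ 1`
    refine ⟨(Real.pi * R ^ 2 + 1) ^ p / (Real.pi * R ^ 2) ^ p, by positivity, ?_⟩
    intro F c hc hd
    set I := ∫ w in ball c R, ‖F w‖ ^ p with hIdef
    have hI0 : 0 ≤ I := setIntegral_nonneg measurableSet_ball
      (fun w _ => Real.rpow_nonneg (norm_nonneg _) p)
    have hIntF : IntegrableOn (fun w => ‖F w‖) (ball c R) :=
      (hc.norm.integrableOn_compact (isCompact_closedBall c R)).mono_set ball_subset_closedBall
    have hIntFp : IntegrableOn (fun w => ‖F w‖ ^ p) (ball c R) :=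
      ((hc.norm.rpow_const (fun x _ => Or.inr hp.le)).integrableOn_compact
        (isCompact_closedBall c R)).mono_set ball_subset_closedBall
    have key : ∀ L : ℝ, 0 < L →
        L * (‖F c‖ * (Real.pi * R ^ 2)) ≤ Real.pi * R ^ 2 + L ^ p * I := by
      intro L hL
      have harea := area_mean_ineq F c R hR hc hd
      have h1 : L * (‖F c‖ * (Real.pi * R ^ 2)) ≤ ∫ w in ball c R, L * ‖F w‖ := by
        rw [MeasureTheory.integral_const_mul]
        exact mul_le_mul_of_nonneg_left harea hL.le
      have h2 : ∫ w in ball c R, L * ‖F w‖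
          ≤ ∫ w in ball c R, (1 + L ^ p * ‖F w‖ ^ p) := by
        refine setIntegral_mono_on (hIntF.const_mul L)
          ((integrableOn_const measure_ball_lt_top.ne).add (hIntFp.const_mul _))
          measurableSet_ball (fun w _ => ?_)
        have hx : (0:ℝ) ≤ L * ‖F w‖ := by positivity
        rcases le_or_gt (L * ‖F w‖) 1 with hle | hlt
        · have : (0:ℝ) ≤ L ^ p * ‖F w‖ ^ p := by
            have := Real.rpow_nonneg hx p; positivity
          linarith
        · have h3 : L * ‖F w‖ = (L * ‖F w‖) ^ (1:ℝ) := (Real.rpow_one _).symm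
          have h4 : (L * ‖F w‖) ^ (1:ℝ) ≤ (L * ‖F w‖) ^ p :=
            Real.rpow_le_rpow_of_exponent_le hlt.le hp1
          have h5 : (L * ‖F w‖) ^ p = L ^ p * ‖F w‖ ^ p :=
            Real.mul_rpow hL.le (norm_nonneg _)
          rw [h5] at h4; rw [← h3] at h4
          have : (0:ℝ) ≤ L ^ p * ‖F w‖ ^ p := by
            have h6 := Real.rpow_nonneg hL.le p
            have h7 := Real.rpow_nonneg (norm_nonneg (F w)) p
            positivity
          linarith
      have h6 : ∫ w in ball c R, (1 + L ^ p * ‖F w‖ ^ p)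
          = Real.pi * R ^ 2 + L ^ p * I := by
        rw [MeasureTheory.integral_add (integrableOn_const (C := (1:ℝ)) measure_ball_lt_top.ne)
          (hIntFp.const_mul _), MeasureTheory.integral_const_mul,
          MeasureTheory.setIntegral_const, measureReal_def, volume_ball_toReal c R hR, smul_eq_mul, mul_one]
      linarith
    by_cases hI : I = 0
    · have hFc : ‖F c‖ = 0 := by
        by_contra hne
        have hFc0 : 0 < ‖F c‖ * (Real.pi * R ^ 2) :=
          mul_pos ((norm_nonneg _).lt_of_ne (Ne.symm hne)) hπR
        have hk := key ((Real.pi * R ^ 2 + 1) / (‖F c‖ * (Real.pi * R ^ 2)))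
          (by positivity)
        rw [div_mul_cancel₀ _ hFc0.ne', hI] at hk
        have hLp : (0:ℝ) ≤ ((Real.pi * R ^ 2 + 1) / (‖F c‖ * (Real.pi * R ^ 2))) ^ p :=
          Real.rpow_nonneg (by positivity) p
        nlinarith
      rw [hFc, Real.zero_rpow hp.ne', hI]
      positivity
    · have hIpos : 0 < I := hI0.lt_of_ne (Ne.symm hI)
      set L := I ^ (-(1/p)) with hLdef
      have hL : 0 < L := Real.rpow_pos_of_pos hIpos _
      have hLpI : L ^ p * I = 1 := by
        rw [hLdef, ← Real.rpow_mul hIpos.le]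
        rw [show -(1/p) * p = -1 by field_simp]
        rw [Real.rpow_neg_one, inv_mul_cancel₀ hIpos.ne']
      have hk := key L hL
      rw [hLpI] at hk
      -- `L * (‖F c‖ * πR²) ≤ πR² + 1`, so `‖F c‖ * πR² ≤ (πR²+1) * I^(1/p)`
      have hstep : ‖F c‖ * (Real.pi * R ^ 2) ≤ (Real.pi * R ^ 2 + 1) * I ^ (1/p) := by
        have hLL : L * I ^ (1/p) = 1 := by
          rw [hLdef, ← Real.rpow_add hIpos]
          norm_num
        have h' := mul_le_mul_of_nonneg_right hk (Real.rpow_nonneg hIpos.le (1/p))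
        calc ‖F c‖ * (Real.pi * R ^ 2)
            = L * (‖F c‖ * (Real.pi * R ^ 2)) * I ^ (1/p) := by
              rw [show L * (‖F c‖ * (Real.pi * R ^ 2)) * I ^ (1/p)
                = (L * I ^ (1/p)) * (‖F c‖ * (Real.pi * R ^ 2)) by ring, hLL, one_mul]
          _ ≤ (Real.pi * R ^ 2 + 1) * I ^ (1/p) := h'
      have hfin : (‖F c‖ * (Real.pi * R ^ 2)) ^ p
          ≤ (Real.pi * R ^ 2 + 1) ^ p * I := by
        have h7 := Real.rpow_le_rpow (by positivity) hstep hp.le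
        rwa [Real.mul_rpow (by positivity) (Real.rpow_nonneg hIpos.le _),
          ← Real.rpow_mul hIpos.le, one_div_mul_cancel hp.ne', Real.rpow_one] at h7
      rw [Real.mul_rpow (norm_nonneg _) hπR.le] at hfin
      rw [div_mul_eq_mul_div, le_div_iff₀ (Real.rpow_pos_of_pos hπR _)]
      linarith [hfin]
  · -- case `p < 1`
    set n := ⌈2 / p⌉₊ with hndef
    have hn2 : 2 / p ≤ (n:ℝ) := Nat.le_ceil _
    have hnp2 : 2 ≤ (n:ℝ) * p := by
      rw [div_le_iff₀ hp] at hn2; linarith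
    have hn1 : 0 < n := by
      rcases Nat.eq_zero_or_pos n with h0 | h; · exfalso; rw [h0] at hnp2; norm_num at hnp2
      exact h
    refine ⟨(4 / Real.pi) * 2 ^ ((n:ℝ) * (1 - p)) * R ^ ((n:ℝ) * p - 2) / R ^ ((n:ℝ) * p),
      by positivity, ?_⟩
    intro F c hc hd
    set I := ∫ w in ball c R, ‖F w‖ ^ p with hIdef
    have hI0 : 0 ≤ I := setIntegral_nonneg measurableSet_ball
      (fun w _ => Real.rpow_nonneg (norm_nonneg _) p)
    have hIntF : IntegrableOn (fun w => ‖F w‖) (ball c R) :=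
      (hc.norm.integrableOn_compact (isCompact_closedBall c R)).mono_set ball_subset_closedBall
    have hIntFp : IntegrableOn (fun w => ‖F w‖ ^ p) (ball c R) :=
      ((hc.norm.rpow_const (fun x _ => Or.inr hp.le)).integrableOn_compact
        (isCompact_closedBall c R)).mono_set ball_subset_closedBall
    set h : ℂ → ℝ := fun z => ‖F z‖ * (max (R - dist z c) 0) ^ n with hhdef
    have hcont : ContinuousOn h (closedBall c R) := by
      apply hc.norm.mul
      exact (((continuous_const.sub (continuous_id.dist continuous_const)).max
        continuous_const).pow n).continuousOn
    obtain ⟨z₁, hz₁mem, hz₁max'⟩ := (isCompact_closedBall c R).exists_isMaxOn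
      ⟨c, mem_closedBall_self hR.le⟩ hcont
    have hz₁max : ∀ w ∈ closedBall c R, h w ≤ h z₁ := fun w hw => hz₁max' hw
    have hhc : h c = ‖F c‖ * R ^ n := by
      simp [hhdef, dist_self, max_eq_left hR.le]
    by_cases hz0 : h z₁ = 0
    · have hFc : ‖F c‖ = 0 := by
        have h1 := hz₁max c (mem_closedBall_self hR.le)
        rw [hz0, hhc] at h1
        have hRn : (0:ℝ) < R ^ n := pow_pos hR n
        nlinarith [norm_nonneg (F c)]
      rw [hFc, Real.zero_rpow hp.ne']
      positivity
    · set d := R - dist z₁ c with hddef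
      set B := ‖F z₁‖ with hBdef
      have hd0 : 0 < d := by
        by_contra hcon
        push_neg at hcon
        have : max (R - dist z₁ c) 0 = 0 := max_eq_right (by rw [← hddef]; linarith)
        rw [hhdef] at hz0; simp only [this] at hz0
        exact hz0 (by rw [zero_pow hn1.ne', mul_zero])
      have hmax : max (R - dist z₁ c) 0 = d := max_eq_left (by rw [← hddef]; linarith)
      have hB0 : 0 < B := by
        rcases (norm_nonneg (F z₁)).lt_or_eq with h' | h'
        · exact h'
        · exfalso; apply hz0; show ‖F z₁‖ * ((R - dist z₁ c) ⊔ 0) ^ n = 0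
          rw [← h', zero_mul]
      have hz₁h : h z₁ = B * d ^ n := by rw [hhdef]; simp only [hmax, ← hBdef]
      have hdR : d ≤ R := by
        rw [hddef]; linarith [dist_nonneg (x := z₁) (y := c)]
      have hsub : closedBall z₁ (d/2) ⊆ ball c R := by
        intro w hw
        rw [mem_closedBall] at hw
        rw [mem_ball]
        calc dist w c ≤ dist w z₁ + dist z₁ c := dist_triangle w z₁ c
          _ ≤ d/2 + (R - d) := by rw [hddef]; linarith
          _ < R := by linarith
      -- sup bound on the small ball
      have hS : ∀ w ∈ closedBall z₁ (d/2), ‖F w‖ ≤ 2 ^ n * B := by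
        intro w hw
        have hwc : w ∈ closedBall c R := ball_subset_closedBall (hsub hw)
        have h1 : h w ≤ B * d ^ n := by rw [← hz₁h]; exact hz₁max w hwc
        have h2 : d/2 ≤ R - dist w c := by
          rw [mem_closedBall] at hw
          have := dist_triangle w z₁ c
          rw [hddef] at *; linarith
        have h3 : (d/2) ^ n ≤ (max (R - dist w c) 0) ^ n := by
          apply pow_le_pow_left₀ (by linarith) (le_max_of_le_left h2)
        have h4 : ‖F w‖ * (d/2) ^ n ≤ B * d ^ n := by
          calc ‖F w‖ * (d/2) ^ n ≤ ‖F w‖ * (max (R - dist w c) 0) ^ n :=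
                mul_le_mul_of_nonneg_left h3 (norm_nonneg _)
            _ ≤ B * d ^ n := h1
        have h5 : (0:ℝ) < (d/2) ^ n := pow_pos (by linarith) n
        rw [← mul_le_mul_iff_left₀ h5]
        have h6 : (2:ℝ) ^ n * (d/2) ^ n = d ^ n := by rw [← mul_pow]; congr 1; ring
        calc ‖F w‖ * (d/2) ^ n ≤ B * d ^ n := h4
          _ = 2 ^ n * B * (d/2) ^ n := by
              rw [show (2:ℝ) ^ n * B * (d/2) ^ n = B * (2 ^ n * (d/2) ^ n) by ring, h6]
      -- area mean at `z₁`
      have harea : B * (Real.pi * (d/2) ^ 2) ≤ ∫ w in ball z₁ (d/2), ‖F w‖ :=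
        area_mean_ineq F z₁ (d/2) (by linarith)
          (hc.mono (hsub.trans ball_subset_closedBall))
          (fun z hz => hd z (hsub (ball_subset_closedBall hz)))
      -- bound the integral
      have hball2 : ball z₁ (d/2) ⊆ ball c R := ball_subset_closedBall.trans hsub
      have hptwise : ∀ w ∈ ball z₁ (d/2),
          ‖F w‖ ≤ (2 ^ n * B) ^ (1 - p) * ‖F w‖ ^ p := by
        intro w hw
        rcases (norm_nonneg (F w)).lt_or_eq with hx | hx
        · have hxS : ‖F w‖ ≤ 2 ^ n * B := hS w (ball_subset_closedBall hw)
          have e1 : ‖F w‖ = ‖F w‖ ^ (1 - p) * ‖F w‖ ^ p := by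
            rw [← Real.rpow_add hx, sub_add_cancel, Real.rpow_one]
          calc ‖F w‖ = ‖F w‖ ^ (1 - p) * ‖F w‖ ^ p := e1
            _ ≤ (2 ^ n * B) ^ (1 - p) * ‖F w‖ ^ p :=
              mul_le_mul_of_nonneg_right
                (Real.rpow_le_rpow (norm_nonneg _) hxS (by linarith))
                (Real.rpow_nonneg (norm_nonneg _) p)
        · rw [← hx, Real.zero_rpow hp.ne', mul_zero]
      have hint1 : ∫ w in ball z₁ (d/2), ‖F w‖
          ≤ (2 ^ n * B) ^ (1 - p) * ∫ w in ball z₁ (d/2), ‖F w‖ ^ p := by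
        rw [← MeasureTheory.integral_const_mul]
        exact setIntegral_mono_on (hIntF.mono_set hball2)
          ((hIntFp.mono_set hball2).const_mul _) measurableSet_ball hptwise
      have hint2 : ∫ w in ball z₁ (d/2), ‖F w‖ ^ p ≤ I := by
        apply setIntegral_mono_set hIntFp
          (Eventually.of_forall fun w => Real.rpow_nonneg (norm_nonneg _) p)
          (HasSubset.Subset.eventuallyLE hball2)
      have hchain : B * (Real.pi * (d/2) ^ 2) ≤ (2 ^ n * B) ^ (1 - p) * I := by
        calc B * (Real.pi * (d/2) ^ 2) ≤ ∫ w in ball z₁ (d/2), ‖F w‖ := harea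
          _ ≤ (2 ^ n * B) ^ (1 - p) * ∫ w in ball z₁ (d/2), ‖F w‖ ^ p := hint1
          _ ≤ (2 ^ n * B) ^ (1 - p) * I :=
              mul_le_mul_of_nonneg_left hint2 (Real.rpow_nonneg (by positivity) _)
      -- extract `B^p d² ≤ (4/π) 2^{n(1-p)} I`
      have hsplit : ((2:ℝ) ^ n * B) ^ (1 - p) = 2 ^ ((n:ℝ) * (1 - p)) * B ^ (1 - p) := by
        rw [Real.mul_rpow (by positivity) hB0.le, ← Real.rpow_natCast (2:ℝ) n,
          ← Real.rpow_mul (by norm_num)]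
      have hBsplit : B = B ^ p * B ^ (1 - p) := by
        rw [← Real.rpow_add hB0, add_sub_cancel, Real.rpow_one]
      have hB1p : 0 < B ^ (1 - p) := Real.rpow_pos_of_pos hB0 _
      have hkey : B ^ p * d ^ 2 ≤ (4 / Real.pi) * 2 ^ ((n:ℝ) * (1 - p)) * I := by
        have hπ := Real.pi_pos
        have h1 : (B ^ p * B ^ (1-p)) * (Real.pi * (d/2)^2)
            ≤ (2 ^ ((n:ℝ)*(1-p)) * B ^ (1-p)) * I := by
          rw [← hBsplit, ← hsplit]; exact hchain
        have h2 : B ^ p * (Real.pi * (d/2)^2) ≤ 2 ^ ((n:ℝ)*(1-p)) * I := by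
          have h3 : B ^ p * (Real.pi * (d/2)^2) * B ^ (1-p)
              ≤ 2 ^ ((n:ℝ)*(1-p)) * I * B ^ (1-p) := by
            calc B ^ p * (Real.pi * (d/2)^2) * B ^ (1-p)
                = (B ^ p * B ^ (1-p)) * (Real.pi * (d/2)^2) := by ring
              _ ≤ (2 ^ ((n:ℝ)*(1-p)) * B ^ (1-p)) * I := h1
              _ = 2 ^ ((n:ℝ)*(1-p)) * I * B ^ (1-p) := by ring
          exact le_of_mul_le_mul_right h3 hB1p
        have h4 : (4/Real.pi) * (B ^ p * (Real.pi * (d/2)^2))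
            ≤ (4/Real.pi) * (2 ^ ((n:ℝ)*(1-p)) * I) :=
          mul_le_mul_of_nonneg_left h2 (by positivity)
        calc B ^ p * d ^ 2 = (4/Real.pi) * (B ^ p * (Real.pi * (d/2)^2)) := by
              field_simp; ring
          _ ≤ (4/Real.pi) * (2 ^ ((n:ℝ)*(1-p)) * I) := h4
          _ = (4 / Real.pi) * 2 ^ ((n:ℝ) * (1 - p)) * I := by ring
      -- now transfer from `z₁` to `c`
      have hhcz : ‖F c‖ * R ^ n ≤ B * d ^ n := by
        rw [← hhc, ← hz₁h]; exact hz₁max c (mem_closedBall_self hR.le)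
      have hfinal : (‖F c‖ * R ^ n) ^ p ≤ B ^ p * (d ^ n) ^ p :=
        le_of_le_of_eq (Real.rpow_le_rpow (by positivity) hhcz hp.le)
          (Real.mul_rpow hB0.le (by positivity))
      have hdnp : ((d:ℝ) ^ n) ^ p = d ^ ((n:ℝ) * p) := by
        rw [← Real.rpow_natCast d n, ← Real.rpow_mul hd0.le]
      have hdnp2 : d ^ ((n:ℝ) * p) ≤ d ^ 2 * R ^ ((n:ℝ) * p - 2) := by
        have e1 : d ^ ((n:ℝ) * p) = d ^ (2:ℝ) * d ^ ((n:ℝ) * p - 2) := by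
          rw [← Real.rpow_add hd0]; congr 1; ring
        have e2 : d ^ (2:ℝ) = d ^ 2 := by
          rw [show (2:ℝ) = ((2:ℕ):ℝ) by norm_num, Real.rpow_natCast]
        rw [e1, e2]
        apply mul_le_mul_of_nonneg_left _ (by positivity)
        exact Real.rpow_le_rpow hd0.le hdR (by linarith)
      have hRnp : (R:ℝ) ^ ((n:ℝ) * p) = (R ^ n) ^ p := by
        rw [← Real.rpow_natCast R n, ← Real.rpow_mul hR.le]
      rw [div_mul_eq_mul_div, le_div_iff₀ (by rw [hRnp]; positivity)]
      have hRnp0 : (0:ℝ) < (R ^ n) ^ p := by positivity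
      rw [Real.mul_rpow (norm_nonneg _) (by positivity : (0:ℝ) ≤ R ^ n)] at hfinal
      calc ‖F c‖ ^ p * R ^ ((n:ℝ) * p) = ‖F c‖ ^ p * (R ^ n) ^ p := by rw [hRnp]
        _ ≤ B ^ p * (d ^ n) ^ p := hfinal
        _ = B ^ p * d ^ ((n:ℝ) * p) := by rw [hdnp]
        _ ≤ B ^ p * (d ^ 2 * R ^ ((n:ℝ) * p - 2)) :=
            mul_le_mul_of_nonneg_left hdnp2 (by positivity)
        _ = (B ^ p * d ^ 2) * R ^ ((n:ℝ) * p - 2) := by ring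
        _ ≤ ((4 / Real.pi) * 2 ^ ((n:ℝ) * (1 - p)) * I) * R ^ ((n:ℝ) * p - 2) :=
            mul_le_mul_of_nonneg_right hkey (by positivity)
        _ = 4 / Real.pi * 2 ^ ((n:ℝ) * (1 - p)) * R ^ ((n:ℝ) * p - 2) * I := by ring

end

/-- If the `L^p(Γ_τ)` integrals of an analytic `F` are uniformly
bounded for `τ ∈ [τ₁, τ₂]`, then `F(ζ(u) + iτ) → 0` uniformly for
`τ ∈ [τ₁ + δ, τ₂ − δ]` as `|u| → ∞`. -/
theorem hardy_lipschitz_uniform_decay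
    (M : ℝ) (hM : 0 < M) (a : ℝ → ℝ)
    (ha : ∀ u₁ u₂ : ℝ, |a u₁ - a u₂| ≤ M * |u₁ - u₂|)
    (p : ℝ) (hp : 0 < p)
    (F : ℂ → ℂ) (hFd : DifferentiableOn ℂ F (OmegaP a))
    (τ₁ τ₂ M₁ : ℝ) (hτ₁ : 0 < τ₁) (hτ₁₂ : τ₁ < τ₂) (hM₁ : 0 < M₁)
    (hbound : ∀ τ ∈ Set.Icc τ₁ τ₂, bdryInt a p F τ ≤ ENNReal.ofReal M₁)
    (δ : ℝ) (hδ : 0 < δ) (hδ' : δ < (τ₂ - τ₁) / 2) :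
    ∀ ε : ℝ, 0 < ε → ∃ R : ℝ, 0 < R ∧
      ∀ u τ : ℝ, R ≤ |u| → τ₁ + δ ≤ τ → τ ≤ τ₂ - δ →
        ‖F (zetaC a u + (τ : ℂ) * Complex.I)‖ < ε := by
  intro ε hε
  -- basic setup
  have hM1 : (0:ℝ) < 1 + M := by linarith
  set ρ : ℝ := δ / (1 + M) with hρdef
  have hρ : 0 < ρ := div_pos hδ hM1
  have hacont : Continuous a := by
    have hlip : LipschitzWith ⟨M, hM.le⟩ a := LipschitzWith.of_dist_le_mul fun x y => by
      rw [Real.dist_eq, Real.dist_eq]; exact ha x y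
    exact hlip.continuous
  have hOopen : IsOpen (OmegaP a) :=
    isOpen_lt (hacont.comp Complex.continuous_re) Complex.continuous_im
  have hFcont : ContinuousOn F (OmegaP a) := hFd.continuousOn
  set S : Set ℂ := {w : ℂ | w.im - a w.re ∈ Set.Icc τ₁ τ₂} with hSdef
  have hgc : Continuous fun w : ℂ => w.im - a w.re :=
    Complex.continuous_im.sub (hacont.comp Complex.continuous_re)
  have hSmeas : MeasurableSet S := hgc.measurable measurableSet_Icc
  have hSsub : S ⊆ OmegaP a := by
    intro w hw
    simp only [hSdef, Set.mem_setOf_eq, Set.mem_Icc] at hw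
    show a w.re < w.im
    linarith [hw.1]
  set q : ℂ → ℝ≥0∞ := fun w => ENNReal.ofReal (‖F w‖ ^ p) with hqdef
  have hnorm_cont : ContinuousOn (fun w => ‖F w‖ ^ p) (OmegaP a) :=
    hFcont.norm.rpow_const (fun x _ => Or.inr hp.le)
  have hq_cont : ContinuousOn q (OmegaP a) :=
    ENNReal.continuous_ofReal.comp_continuousOn hnorm_cont
  set ftil : ℂ → ℝ≥0∞ := S.indicator q with hftil
  have hae : AEMeasurable ftil volume := by
    rw [aemeasurable_indicator_iff hSmeas]
    exact (hq_cont.mono hSsub).aemeasurable hSmeas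
  -- total mass bound
  have hTtot : ∫⁻ w, ftil w ≤ ENNReal.ofReal M₁ * ENNReal.ofReal (τ₂ - τ₁) := by
    have h1 : MeasurePreserving Complex.measurableEquivRealProd.symm :=
      Complex.volume_preserving_equiv_real_prod.symm _
    set Q : ℝ → ℝ → ℝ≥0∞ :=
      fun x t => ENNReal.ofReal (‖F (zetaC a x + (t:ℂ) * Complex.I)‖ ^ p) with hQdef
    have hindic : ∀ x t : ℝ, ftil (Complex.measurableEquivRealProd.symm (x, t + a x))
        = (Set.Icc τ₁ τ₂).indicator (fun s => Q x s) t := by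
      intro x t
      have hw : Complex.measurableEquivRealProd.symm (x, t + a x)
          = zetaC a x + (t:ℂ) * Complex.I := by
        rw [Complex.measurableEquivRealProd_symm_apply]
        apply Complex.ext <;> simp [zetaC] <;> ring
      have hmem : Complex.measurableEquivRealProd.symm (x, t + a x) ∈ S ↔
          t ∈ Set.Icc τ₁ τ₂ := by
        rw [Complex.measurableEquivRealProd_symm_apply]
        simp only [hSdef, Set.mem_setOf_eq]
        norm_num
      by_cases ht : t ∈ Set.Icc τ₁ τ₂
      · rw [Set.indicator_of_mem ht, hftil, Set.indicator_of_mem (hmem.mpr ht), hqdef, hw]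
      · rw [Set.indicator_of_notMem ht, hftil,
          Set.indicator_of_notMem (fun hc => ht (hmem.mp hc))]
    have hg : AEMeasurable (fun x : ℝ × ℝ => ftil (Complex.measurableEquivRealProd.symm x))
        ((volume : Measure ℝ).prod (volume : Measure ℝ)) := by
      rw [← Measure.volume_eq_prod]
      exact hae.comp_quasiMeasurePreserving h1.quasiMeasurePreserving
    have hψ : Continuous fun z : ℝ × ℝ => zetaC a z.1 + (z.2:ℂ) * Complex.I := by
      simp only [zetaC]
      exact ((Complex.continuous_ofReal.comp continuous_fst).add
        ((Complex.continuous_ofReal.comp (hacont.comp continuous_fst)).mul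
          continuous_const)).add
        ((Complex.continuous_ofReal.comp continuous_snd).mul continuous_const)
    have hmapsTo : Set.MapsTo (fun z : ℝ × ℝ => zetaC a z.1 + (z.2:ℂ) * Complex.I)
        (Set.univ ×ˢ Set.Icc τ₁ τ₂) (OmegaP a) := by
      rintro ⟨x, t⟩ ⟨-, ht⟩
      show a (zetaC a x + (t:ℂ) * Complex.I).re < (zetaC a x + (t:ℂ) * Complex.I).im
      have hre : (zetaC a x + (t:ℂ) * Complex.I).re = x := by simp [zetaC]
      have him : (zetaC a x + (t:ℂ) * Complex.I).im = a x + t := by simp [zetaC]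
      rw [hre, him]
      have := ht.1
      linarith [hτ₁]
    have hQcont : ContinuousOn (fun z : ℝ × ℝ => Q z.1 z.2)
        (Set.univ ×ˢ Set.Icc τ₁ τ₂) :=
      ENNReal.continuous_ofReal.comp_continuousOn
        (((hFcont.comp hψ.continuousOn hmapsTo).norm).rpow_const
          (fun x _ => Or.inr hp.le))
    have hmeq : (volume : Measure ℝ).prod ((volume : Measure ℝ).restrict (Set.Icc τ₁ τ₂))
        = ((volume : Measure ℝ).prod (volume : Measure ℝ)).restrict
            (Set.univ ×ˢ Set.Icc τ₁ τ₂) := by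
      rw [← Measure.prod_restrict, Measure.restrict_univ]
    have hQae : AEMeasurable (Function.uncurry Q)
        ((volume : Measure ℝ).prod ((volume : Measure ℝ).restrict (Set.Icc τ₁ τ₂))) := by
      rw [hmeq, ← Measure.volume_eq_prod]
      exact hQcont.aemeasurable (MeasurableSet.univ.prod measurableSet_Icc)
    have harc : ∀ x : ℝ, 1 ≤ arcDen a x := by
      intro x
      rw [arcDen, show (1:ℝ) = Real.sqrt 1 from Real.sqrt_one.symm]
      exact Real.sqrt_le_sqrt (by nlinarith [sq_nonneg (deriv a x), Real.sqrt_one])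
    calc ∫⁻ w, ftil w
        = ∫⁻ x : ℝ × ℝ, ftil (Complex.measurableEquivRealProd.symm x) := by
          conv_lhs => rw [← h1.map_eq]
          exact MeasureTheory.lintegral_map_equiv ftil Complex.measurableEquivRealProd.symm
      _ = ∫⁻ x : ℝ, ∫⁻ y : ℝ, ftil (Complex.measurableEquivRealProd.symm (x, y)) := by
          rw [Measure.volume_eq_prod]
          exact MeasureTheory.lintegral_prod _ hg
      _ = ∫⁻ x : ℝ, ∫⁻ t : ℝ, ftil (Complex.measurableEquivRealProd.symm (x, t + a x)) := by
          refine lintegral_congr fun x => ?_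
          exact (MeasureTheory.lintegral_add_right_eq_self
            (fun y => ftil (Complex.measurableEquivRealProd.symm (x, y))) (a x)).symm
      _ = ∫⁻ x : ℝ, ∫⁻ t in Set.Icc τ₁ τ₂, Q x t := by
          refine lintegral_congr fun x => ?_
          rw [← MeasureTheory.lintegral_indicator measurableSet_Icc _]
          exact lintegral_congr fun t => hindic x t
      _ = ∫⁻ t in Set.Icc τ₁ τ₂, ∫⁻ x : ℝ, Q x t :=
          MeasureTheory.lintegral_lintegral_swap hQae
      _ ≤ ∫⁻ _t in Set.Icc τ₁ τ₂, ENNReal.ofReal M₁ := by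
          refine lintegral_mono_ae ?_
          filter_upwards [ae_restrict_mem measurableSet_Icc] with t ht
          calc ∫⁻ x, Q x t
              ≤ bdryInt a p F t := by
                refine lintegral_mono fun x => ?_
                refine ENNReal.ofReal_le_ofReal ?_
                exact le_mul_of_one_le_right (Real.rpow_nonneg (norm_nonneg _) _) (harc x)
            _ ≤ ENNReal.ofReal M₁ := hbound t ht
      _ = ENNReal.ofReal M₁ * ENNReal.ofReal (τ₂ - τ₁) := by
          rw [MeasureTheory.setLIntegral_const, Real.volume_Icc]
  -- the finite measure with density
  set mk : ℂ → ℝ≥0∞ := hae.mk ftil with hmkdef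
  set ν : Measure ℂ := volume.withDensity mk with hνdef
  have hνtop : ν Set.univ < ⊤ := by
    rw [hνdef, MeasureTheory.withDensity_apply _ MeasurableSet.univ, Measure.restrict_univ]
    calc ∫⁻ w, mk w = ∫⁻ w, ftil w := lintegral_congr_ae hae.ae_eq_mk.symm
      _ ≤ ENNReal.ofReal M₁ * ENNReal.ofReal (τ₂ - τ₁) := hTtot
      _ < ⊤ := ENNReal.mul_lt_top ENNReal.ofReal_lt_top ENNReal.ofReal_lt_top
  -- tail decay of ν
  have hmeasn : ∀ n : ℕ, MeasurableSet {w : ℂ | (n:ℝ) < |w.re|} := fun n =>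
    (isOpen_lt continuous_const (continuous_abs.comp Complex.continuous_re)).measurableSet
  have hanti : Antitone (fun n : ℕ => {w : ℂ | (n:ℝ) < |w.re|}) := by
    intro m n hmn w hw
    simp only [Set.mem_setOf_eq] at hw ⊢
    exact lt_of_le_of_lt (by exact_mod_cast hmn) hw
  have hiInter : ⋂ n : ℕ, {w : ℂ | (n:ℝ) < |w.re|} = ∅ := by
    ext w
    simp only [Set.mem_iInter, Set.mem_setOf_eq, Set.mem_empty_iff_false, iff_false,
      not_forall, not_lt]
    obtain ⟨n, hn⟩ := exists_nat_gt |w.re|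
    exact ⟨n, hn.le⟩
  have htail : Tendsto (fun n : ℕ => ν {w : ℂ | (n:ℝ) < |w.re|}) atTop (𝓝 0) := by
    have h := MeasureTheory.tendsto_measure_iInter_atTop (μ := ν)
      (fun n => (hmeasn n).nullMeasurableSet) hanti
      ⟨0, (lt_of_le_of_lt (measure_mono (Set.subset_univ _)) hνtop).ne⟩
    rwa [hiInter, measure_empty] at h
  -- submean constant
  obtain ⟨C, hC, hsub⟩ := submean_pow p ρ hp hρ
  have hεp : (0:ℝ) < (ε/2) ^ p / C := by
    have := Real.rpow_pos_of_pos (show (0:ℝ) < ε/2 by linarith) p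
    positivity
  have hε'pos : (0:ℝ≥0∞) < ENNReal.ofReal ((ε/2) ^ p / C) := ENNReal.ofReal_pos.mpr hεp
  obtain ⟨n, hn⟩ := (htail.eventually_lt_const hε'pos).exists
  refine ⟨(n:ℝ) + ρ + 1, by positivity, ?_⟩
  intro u τ hu hτa hτb
  set z₀ : ℂ := zetaC a u + (τ:ℂ) * Complex.I with hz₀def
  have hz₀re : z₀.re = u := by simp [hz₀def, zetaC]
  have hz₀im : z₀.im = a u + τ := by simp [hz₀def, zetaC]
  -- the closed ball sits inside the strip S
  have hball : Metric.closedBall z₀ ρ ⊆ S := by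
    intro w hw
    rw [Metric.mem_closedBall, Complex.dist_eq] at hw
    have hre : |w.re - u| ≤ ρ := by
      have h' := Complex.abs_re_le_norm (w - z₀)
      rw [Complex.sub_re, hz₀re] at h'
      exact h'.trans hw
    have him : |w.im - (a u + τ)| ≤ ρ := by
      have h' := Complex.abs_im_le_norm (w - z₀)
      rw [Complex.sub_im, hz₀im] at h'
      exact h'.trans hw
    have hMa : |a u - a w.re| ≤ M * ρ := by
      calc |a u - a w.re| ≤ M * |u - w.re| := ha u w.re
        _ ≤ M * ρ := by
            have : |u - w.re| ≤ ρ := by rwa [abs_sub_comm]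
            exact mul_le_mul_of_nonneg_left this hM.le
    have hδeq : ρ + M * ρ = δ := by
      rw [hρdef]; field_simp
    have htr : |w.im - a w.re - τ| ≤ δ := by
      have heq : w.im - a w.re - τ = (w.im - (a u + τ)) + (a u - a w.re) := by ring
      rw [heq]
      calc |(w.im - (a u + τ)) + (a u - a w.re)|
          ≤ |w.im - (a u + τ)| + |a u - a w.re| := abs_add_le _ _
        _ ≤ ρ + M * ρ := add_le_add him hMa
        _ = δ := hδeq
    obtain ⟨htr1, htr2⟩ := abs_le.mp htr
    show w.im - a w.re ∈ Set.Icc τ₁ τ₂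
    constructor <;> [linarith; linarith]
  -- apply the submean inequality
  have hFcball : ContinuousOn F (Metric.closedBall z₀ ρ) :=
    hFcont.mono (hball.trans hSsub)
  have hFdball : ∀ z ∈ Metric.ball z₀ ρ, DifferentiableAt ℂ F z := fun z hz =>
    hFd.differentiableAt (hOopen.mem_nhds (hSsub (hball (Metric.ball_subset_closedBall hz))))
  have hkey := hsub F z₀ hFcball hFdball
  -- identify the integral with ν of the ball
  have hIntFp : IntegrableOn (fun w => ‖F w‖ ^ p) (Metric.ball z₀ ρ) :=
    ((hFcball.norm.rpow_const (fun x _ => Or.inr hp.le)).integrableOn_compact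
      (isCompact_closedBall z₀ ρ)).mono_set Metric.ball_subset_closedBall
  have hIof : ENNReal.ofReal (∫ w in Metric.ball z₀ ρ, ‖F w‖ ^ p)
      = ∫⁻ w in Metric.ball z₀ ρ, q w :=
    MeasureTheory.ofReal_integral_eq_lintegral_ofReal hIntFp
      (Filter.Eventually.of_forall fun w => Real.rpow_nonneg (norm_nonneg _) _)
  have hIq : ∫⁻ w in Metric.ball z₀ ρ, q w = ν (Metric.ball z₀ ρ) := by
    calc ∫⁻ w in Metric.ball z₀ ρ, q w
        = ∫⁻ w in Metric.ball z₀ ρ, ftil w := by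
          refine MeasureTheory.setLIntegral_congr_fun measurableSet_ball
            (fun w hw => ?_)
          exact (Set.indicator_of_mem (hball (Metric.ball_subset_closedBall hw)) q).symm
      _ = ∫⁻ w in Metric.ball z₀ ρ, mk w :=
          lintegral_congr_ae (ae_restrict_of_ae hae.ae_eq_mk)
      _ = ν (Metric.ball z₀ ρ) :=
          (MeasureTheory.withDensity_apply mk measurableSet_ball).symm
  -- the ball is in the tail region
  have hsn : Metric.ball z₀ ρ ⊆ {w : ℂ | (n:ℝ) < |w.re|} := by
    intro w hw
    rw [Metric.mem_ball, Complex.dist_eq] at hw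
    have hre : |w.re - u| ≤ ρ := by
      have h' := Complex.abs_re_le_norm (w - z₀)
      rw [Complex.sub_re, hz₀re] at h'
      exact h'.trans hw.le
    have h1 : |u| - |w.re| ≤ |u - w.re| := abs_sub_abs_le_abs_sub u w.re
    rw [abs_sub_comm] at hre
    show (n:ℝ) < |w.re|
    linarith [hu]
  have hνball : ν (Metric.ball z₀ ρ) < ENNReal.ofReal ((ε/2) ^ p / C) :=
    lt_of_le_of_lt (measure_mono hsn) hn
  -- conclude
  have hIlt : (∫ w in Metric.ball z₀ ρ, ‖F w‖ ^ p) < (ε/2) ^ p / C := by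
    have h2 : ENNReal.ofReal (∫ w in Metric.ball z₀ ρ, ‖F w‖ ^ p)
        < ENNReal.ofReal ((ε/2) ^ p / C) := by rw [hIof, hIq]; exact hνball
    exact (ENNReal.ofReal_lt_ofReal_iff hεp).mp h2
  have hfin : ‖F z₀‖ ^ p < (ε/2) ^ p := by
    calc ‖F z₀‖ ^ p ≤ C * ∫ w in Metric.ball z₀ ρ, ‖F w‖ ^ p := hkey
      _ < C * ((ε/2) ^ p / C) := by
          exact mul_lt_mul_of_pos_left hIlt hC
      _ = (ε/2) ^ p := by field_simp
  by_contra hcon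
  push_neg at hcon
  have h3 : ε ^ p ≤ ‖F z₀‖ ^ p := Real.rpow_le_rpow hε.le hcon hp.le
  have h4 : (ε/2) ^ p < ε ^ p :=
    Real.rpow_lt_rpow (by positivity) (by linarith) hp
  linarith
end

section
/- Let 1 ≤ p < ∞ and let g : Γ → ℂ satisfy ∫_Γ |g(ζ)|^p |dζ| < ∞. Define F on Ω₊ by F(ζ₀ + iτ) = ∫_Γ K_{iτ}(ζ, ζ₀) g(ζ) dζ for ζ₀ ∈ Γ and τ > 0 (every point of Ω₊ is uniquely of the form ζ₀ + iτ with ζ₀ ∈ Γ, τ > 0). Then sup_{τ>0} ∫_Γ |F(ζ + iτ)|^p |dζ| < ∞. -/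
open Complex MeasureTheory Filter Set
open scoped ENNReal Real Topology BigOperators

set_option maxHeartbeats 1000000

section Aux
open Complex MeasureTheory

private lemma denom_lb (M d e τ : ℝ) (hτ : 0 < τ) (he : |e| ≤ M * |d|) :
    (d^2 + τ^2) / (8 + 4*M^2) ≤ ‖(((d:ℂ) + (e:ℂ)*Complex.I)^2 + (τ:ℂ)^2)‖ := by
  have hM2 : (0:ℝ) < 8 + 4*M^2 := by positivity
  have factor : ((d:ℂ) + (e:ℂ)*Complex.I)^2 + (τ:ℂ)^2
      = ((d:ℂ) + ((e+τ : ℝ):ℂ)*Complex.I) * ((d:ℂ) + ((e-τ : ℝ):ℂ)*Complex.I) := by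
    push_cast
    linear_combination (τ:ℂ)^2 * Complex.I_sq
  have hPnn : (0:ℝ) ≤ (d^2+(e+τ)^2) * (d^2+(e-τ)^2) :=
    mul_nonneg (by positivity) (by positivity)
  rw [factor, norm_mul, Complex.norm_add_mul_I, Complex.norm_add_mul_I,
    ← Real.sqrt_mul (by positivity)]
  rw [Real.le_sqrt (by positivity) hPnn]
  have he2 : e^2 ≤ M^2 * d^2 := by
    have h0 := mul_self_le_mul_self (abs_nonneg e) he
    have h1 : |e| * |e| = e^2 := by rw [← abs_mul, abs_mul_self e, sq]
    have h2 : M * |d| * (M * |d|) = M^2 * d^2 := by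
      rw [mul_mul_mul_comm, ← abs_mul, abs_mul_self d]; ring
    nlinarith [h0]
  have key : (d^2+(e+τ)^2) * (d^2+(e-τ)^2)
      = (τ^2 - e^2)^2 + d^2*d^2 + 2*d^2*(e^2+τ^2) := by ring
  rw [div_pow, div_le_iff₀ (by positivity)]
  rcases le_or_gt (τ^2) (4*(1+M^2)*d^2) with hc | hc
  · have h5 : d^2 + τ^2 ≤ (5 + 4*M^2) * d^2 := by nlinarith [hc]
    have hP : d^2*d^2 ≤ (d^2+(e+τ)^2)*(d^2+(e-τ)^2) := by
      nlinarith [key, sq_nonneg (τ^2-e^2), sq_nonneg d, sq_nonneg e, sq_nonneg τ,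
        mul_nonneg (sq_nonneg d) (add_nonneg (sq_nonneg e) (sq_nonneg τ))]
    have h6 := mul_self_le_mul_self (by positivity : (0:ℝ) ≤ d^2+τ^2) h5
    have h7 : (5+4*M^2) * d^2 * ((5+4*M^2) * d^2)
        ≤ (8+4*M^2)^2 * ((d^2+(e+τ)^2)*(d^2+(e-τ)^2)) := by
      have : (5+4*M^2) * d^2 * ((5+4*M^2) * d^2) = (5+4*M^2)^2 * (d^2*d^2) := by ring
      rw [this]
      exact mul_le_mul (by nlinarith [sq_nonneg M]) hP (by positivity) (by positivity)
    nlinarith [h6, h7]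
  · have hd2 : 4 * d^2 ≤ τ^2 := by nlinarith [sq_nonneg (M*d)]
    have hee : 4 * e^2 ≤ τ^2 := by nlinarith [sq_nonneg (M*τ), sq_nonneg (M*d)]
    have hP2 : (τ^2-e^2)^2 ≤ (d^2+(e+τ)^2)*(d^2+(e-τ)^2) := by
      nlinarith [key, sq_nonneg d,
        mul_nonneg (sq_nonneg d) (add_nonneg (sq_nonneg e) (sq_nonneg τ))]
    have h9 : (3*τ^2/4)^2 ≤ (τ^2-e^2)^2 := by
      apply pow_le_pow_left₀ (by positivity)
      linarith
    have h10 : (d^2+τ^2)^2 ≤ (5*τ^2/4)^2 := by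
      apply pow_le_pow_left₀ (by positivity)
      linarith
    have h64 : (0:ℝ) ≤ (8+4*M^2)^2 - 64 := by nlinarith [sq_nonneg M]
    have hA : (d^2+τ^2)^2 ≤ 64 * ((τ^2-e^2)^2) := by nlinarith [h9, h10, mul_pos hτ hτ]
    have hB : (64:ℝ) * ((τ^2-e^2)^2) ≤ 64 * ((d^2+(e+τ)^2)*(d^2+(e-τ)^2)) := by linarith [hP2]
    have hC : (64:ℝ) * ((d^2+(e+τ)^2)*(d^2+(e-τ)^2))
        ≤ (8+4*M^2)^2 * ((d^2+(e+τ)^2)*(d^2+(e-τ)^2)) := by nlinarith [mul_nonneg h64 hPnn]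
    nlinarith [hA, hB, hC]

private lemma deriv_bound {M : ℝ} (hM : 0 ≤ M) {a : ℝ → ℝ}
    (ha : ∀ u₁ u₂ : ℝ, |a u₁ - a u₂| ≤ M * |u₁ - u₂|) (u : ℝ) :
    |deriv a u| ≤ M := by
  have hlip : LipschitzWith M.toNNReal a := by
    apply LipschitzWith.of_dist_le_mul
    intro x y
    rw [Real.dist_eq, Real.dist_eq, Real.coe_toNNReal M hM]
    exact ha x y
  have h1 : ‖fderiv ℝ a u‖ ≤ M := by
    simpa [Real.coe_toNNReal M hM] using norm_fderiv_le_of_lipschitz ℝ hlip (x₀ := u)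
  calc |deriv a u| = ‖(fderiv ℝ a u) 1‖ := by
        rw [fderiv_apply_one_eq_deriv]; exact (Real.norm_eq_abs _).symm
    _ ≤ ‖fderiv ℝ a u‖ * ‖(1:ℝ)‖ := (fderiv ℝ a u).le_opNorm 1
    _ ≤ M := by simpa using h1

private lemma zeta_sub (a : ℝ → ℝ) (u u₀ : ℝ) :
    zetaC a u - zetaC a u₀ = ((u - u₀ : ℝ) : ℂ) + ((a u - a u₀ : ℝ) : ℂ) * Complex.I := by
  simp only [zetaC]; push_cast; ring

private lemma tauI_sq (τ : ℝ) : (((τ:ℂ)) * Complex.I)^2 = -((τ:ℂ)^2) := by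
  rw [mul_pow, Complex.I_sq]; ring

private lemma denom_lb' {M : ℝ} {a : ℝ → ℝ}
    (ha : ∀ u₁ u₂ : ℝ, |a u₁ - a u₂| ≤ M * |u₁ - u₂|) {τ : ℝ} (hτ : 0 < τ) (u₀ u : ℝ) :
    ((u - u₀)^2 + τ^2) / (8 + 4*M^2)
      ≤ ‖(zetaC a u - zetaC a u₀)^2 + (τ:ℂ)^2‖ := by
  rw [zeta_sub a u u₀]
  exact denom_lb M (u - u₀) (a u - a u₀) τ hτ (ha u u₀)

private lemma integrand_bound {M : ℝ} (hM : 0 ≤ M) {a : ℝ → ℝ}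
    (ha : ∀ u₁ u₂ : ℝ, |a u₁ - a u₂| ≤ M * |u₁ - u₂|) (g : ℝ → ℂ)
    {τ : ℝ} (hτ : 0 < τ) (u₀ u : ℝ) :
    ‖Kker ((τ:ℂ) * Complex.I) (zetaC a u) (zetaC a u₀) * g u
        * (1 + Complex.I * Complex.ofReal (deriv a u))‖
      ≤ ((8 + 4*M^2) * Real.sqrt (1 + M^2)) * (τ / (Real.pi * ((u - u₀)^2 + τ^2))) * ‖g u‖ := by
  have hπ : (0:ℝ) < Real.pi := Real.pi_pos
  have hden := denom_lb' ha hτ u₀ u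
  set A : ℝ := (u - u₀)^2 + τ^2 with hA
  have hApos : 0 < A := by positivity
  set D : ℂ := (zetaC a u - zetaC a u₀)^2 + (τ:ℂ)^2 with hD
  have hDpos : 0 < ‖D‖ := lt_of_lt_of_le (by positivity) hden
  have hKnorm : ‖Kker ((τ:ℂ) * Complex.I) (zetaC a u) (zetaC a u₀)‖
      = (Real.pi)⁻¹ * (τ / ‖D‖) := by
    rw [Kker, tauI_sq, sub_neg_eq_add, ← hD]
    simp [norm_mul, norm_div, Complex.norm_real, Real.norm_eq_abs,
      abs_of_pos hπ, abs_of_pos hτ]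
  have hKle : ‖Kker ((τ:ℂ) * Complex.I) (zetaC a u) (zetaC a u₀)‖
      ≤ (8 + 4*M^2) * (τ / (Real.pi * A)) := by
    rw [hKnorm]
    have h0 : 0 < A / (8 + 4*M^2) := by positivity
    have h1 : (Real.pi)⁻¹ * (τ / ‖D‖)
        ≤ (Real.pi)⁻¹ * (τ / (A / (8 + 4*M^2))) :=
      mul_le_mul_of_nonneg_left (div_le_div_of_nonneg_left hτ.le h0 hden) (by positivity)
    refine h1.trans_eq ?_
    rw [div_div_eq_mul_div]
    field_simp
  have hc : ‖(1 + Complex.I * Complex.ofReal (deriv a u))‖ ≤ Real.sqrt (1 + M^2) := by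
    have h2 : (1:ℂ) + Complex.I * Complex.ofReal (deriv a u)
        = ((1:ℝ):ℂ) + Complex.ofReal (deriv a u) * Complex.I := by push_cast; ring
    rw [h2, Complex.norm_add_mul_I]
    apply Real.sqrt_le_sqrt
    nlinarith [deriv_bound hM ha u, sq_abs (deriv a u), abs_nonneg (deriv a u)]
  calc ‖Kker ((τ:ℂ) * Complex.I) (zetaC a u) (zetaC a u₀) * g u
        * (1 + Complex.I * Complex.ofReal (deriv a u))‖
      = ‖Kker ((τ:ℂ) * Complex.I) (zetaC a u) (zetaC a u₀)‖ * ‖g u‖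
        * ‖(1 + Complex.I * Complex.ofReal (deriv a u))‖ := by
        rw [norm_mul, norm_mul]
    _ ≤ ((8 + 4*M^2) * (τ / (Real.pi * A))) * ‖g u‖ * Real.sqrt (1 + M^2) := by
        gcongr
    _ = ((8 + 4*M^2) * Real.sqrt (1 + M^2)) * (τ / (Real.pi * A)) * ‖g u‖ := by ring

private lemma kker_ne_zero {M : ℝ} {a : ℝ → ℝ}
    (ha : ∀ u₁ u₂ : ℝ, |a u₁ - a u₂| ≤ M * |u₁ - u₂|) {τ : ℝ} (hτ : 0 < τ) (u₀ u : ℝ) :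
    Kker ((τ:ℂ) * Complex.I) (zetaC a u) (zetaC a u₀) ≠ 0 := by
  have hden := denom_lb' ha hτ u₀ u
  have hDpos : 0 < ‖(zetaC a u - zetaC a u₀)^2 + (τ:ℂ)^2‖ :=
    lt_of_lt_of_le (by positivity) hden
  rw [Kker]
  apply mul_ne_zero
  · simp [Real.pi_ne_zero, Complex.I_ne_zero]
  · apply div_ne_zero
    · exact mul_ne_zero (by exact_mod_cast hτ.ne') Complex.I_ne_zero
    · rw [tauI_sq, sub_neg_eq_add]
      intro h0
      rw [h0] at hDpos
      simp at hDpos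

private lemma jensen_rpow {w f : ℝ → ℝ≥0∞} (hw : Measurable w) (hf : Measurable f)
    {p : ℝ} (hp : 1 ≤ p) (hw1 : ∫⁻ x, w x ≤ 1) :
    (∫⁻ x, w x * f x) ^ p ≤ ∫⁻ x, w x * f x ^ p := by
  rcases eq_or_lt_of_le hp with h1 | h1
  · simp [← h1]
  · set q := p.conjExponent with hq
    have hpq : p.HolderConjugate q := Real.HolderConjugate.conjExponent h1
    have hp0 : 0 < p := hpq.pos
    have hq0 : 0 < q := hpq.symm.pos
    have hmul : ∀ x, w x * f x = (w x ^ (1/p) * f x) * (w x ^ (1/q)) := by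
      intro x
      rw [mul_comm (w x ^ (1/p)) (f x), mul_assoc, ← ENNReal.rpow_add_of_nonneg _ _
        (by positivity) (by positivity)]
      rw [show 1/p + 1/q = 1 by
        rw [one_div, one_div]; exact hpq.inv_add_inv_eq_one]
      rw [ENNReal.rpow_one, mul_comm]
    have hH := ENNReal.lintegral_mul_le_Lp_mul_Lq (volume : Measure ℝ) hpq
      (f := fun x => w x ^ (1/p) * f x) (g := fun x => w x ^ (1/q))
      ((hw.pow_const _).mul hf).aemeasurable (hw.pow_const _).aemeasurable
    have e1 : ∀ x, (w x ^ (1/p) * f x) ^ p = w x * f x ^ p := by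
      intro x
      rw [ENNReal.mul_rpow_of_nonneg _ _ hp0.le, ← ENNReal.rpow_mul,
        one_div_mul_cancel hp0.ne', ENNReal.rpow_one]
    have e2 : ∀ x, (w x ^ (1/q)) ^ q = w x := by
      intro x
      rw [← ENNReal.rpow_mul, one_div_mul_cancel hq0.ne', ENNReal.rpow_one]
    simp only [Pi.mul_apply, e1, e2] at hH
    calc (∫⁻ x, w x * f x) ^ p
        = (∫⁻ x, (w x ^ (1/p) * f x) * (w x ^ (1/q))) ^ p := by
          congr 1; exact lintegral_congr hmul
      _ ≤ ((∫⁻ x, w x * f x ^ p) ^ (1/p) * (∫⁻ x, w x) ^ (1/q)) ^ p :=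
          ENNReal.rpow_le_rpow hH hp0.le
      _ ≤ ((∫⁻ x, w x * f x ^ p) ^ (1/p) * 1) ^ p := by
          gcongr
          exact ENNReal.rpow_le_one hw1 (by positivity)
      _ = ∫⁻ x, w x * f x ^ p := by
          rw [mul_one, ← ENNReal.rpow_mul, one_div_mul_cancel hp0.ne', ENNReal.rpow_one]

private lemma poisson_lintegral {τ : ℝ} (hτ : 0 < τ) :
    ∫⁻ x : ℝ, ENNReal.ofReal (τ / (Real.pi * (x^2 + τ^2))) = 1 := by
  have hπ : (0:ℝ) < Real.pi := Real.pi_pos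
  have heq : ∀ x : ℝ, τ / (Real.pi * (x^2 + τ^2))
      = (Real.pi * τ)⁻¹ * (1 + (x/τ)^2)⁻¹ := by
    intro x
    rw [div_pow]
    field_simp
    ring
  have hint : Integrable (fun x : ℝ => τ / (Real.pi * (x^2 + τ^2))) := by
    simp only [heq]
    exact (integrable_inv_one_add_sq.comp_div hτ.ne').const_mul _
  rw [← ofReal_integral_eq_lintegral_ofReal hint
    (Filter.Eventually.of_forall fun x => by positivity)]
  have h3 : ∫ x : ℝ, τ / (Real.pi * (x^2 + τ^2))
      = (Real.pi * τ)⁻¹ * (|τ| * Real.pi) := by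
    simp only [heq]
    rw [integral_const_mul]
    congr 1
    have h4 := MeasureTheory.Measure.integral_comp_div (fun y : ℝ => (1 + y^2)⁻¹) τ
    simp only [div_pow] at h4 ⊢
    rw [h4, integral_univ_inv_one_add_sq, smul_eq_mul]
  rw [h3, abs_of_pos hτ]
  rw [show (Real.pi * τ)⁻¹ * (τ * Real.pi) = 1 by field_simp]
  exact ENNReal.ofReal_one

end Aux

/-- If `g ∈ L^p(Γ, |dζ|)` (`1 ≤ p < ∞`) and `F` is defined on
`Ω₊` by `F(ζ₀ + iτ) = ∫_Γ K_{iτ}(ζ, ζ₀) g(ζ) dζ`, then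
`sup_{τ>0} ∫_Γ |F(ζ + iτ)|^p |dζ| < ∞`. -/
theorem hardy_lipschitz_kernel_bounded
    (M : ℝ) (hM : 0 < M) (a : ℝ → ℝ)
    (ha : ∀ u₁ u₂ : ℝ, |a u₁ - a u₂| ≤ M * |u₁ - u₂|)
    (p : ℝ) (hp : 1 ≤ p)
    (g : ℝ → ℂ)
    (hg : (∫⁻ u : ℝ, ENNReal.ofReal (‖g u‖ ^ p * arcDen a u)) < ⊤)
    (F : ℂ → ℂ)
    (hF : ∀ u₀ τ : ℝ, 0 < τ →
      F (zetaC a u₀ + (τ : ℂ) * Complex.I)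
        = ∫ u : ℝ, Kker ((τ : ℂ) * Complex.I) (zetaC a u) (zetaC a u₀) * g u *
            (1 + Complex.I * Complex.ofReal (deriv a u))) :
    HpPow a p F < ⊤ := by
  classical
  have hM0 : 0 ≤ M := hM.le
  have hp0 : (0:ℝ) < p := lt_of_lt_of_le one_pos hp
  set s : ℝ := Real.sqrt (1 + M^2) with hs
  have hs0 : 0 ≤ s := Real.sqrt_nonneg _
  set C₀ : ℝ := (8 + 4*M^2) * s with hC₀
  have hC₀0 : 0 ≤ C₀ := by positivity
  have harc : ∀ u, arcDen a u ≤ s := by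
    intro u
    apply Real.sqrt_le_sqrt
    nlinarith [deriv_bound hM0 ha u, sq_abs (deriv a u), abs_nonneg (deriv a u)]
  have harc1 : ∀ u, (1:ℝ) ≤ arcDen a u := by
    intro u
    have h1 := Real.sqrt_le_sqrt (show (1:ℝ) ≤ 1 + deriv a u ^ 2 by nlinarith [sq_nonneg (deriv a u)])
    rw [Real.sqrt_one] at h1
    simpa [arcDen] using h1
  have hGfin : ∫⁻ u, ((‖g u‖₊ : ℝ≥0∞)) ^ p < ⊤ := by
    refine lt_of_le_of_lt (lintegral_mono fun u => ?_) hg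
    rw [← enorm_eq_nnnorm, ← ofReal_norm, ENNReal.ofReal_rpow_of_nonneg (norm_nonneg _) hp0.le]
    apply ENNReal.ofReal_le_ofReal
    exact le_mul_of_one_le_right (Real.rpow_nonneg (norm_nonneg _) p) (harc1 u)
  by_cases hmg : AEStronglyMeasurable g volume
  · -- main case
    obtain ⟨G, hGsm, hgG⟩ := hmg
    have hGm : Measurable G := hGsm.measurable
    have hHm : Measurable fun u => ((‖G u‖₊ : ℝ≥0∞)) ^ p :=
      (hGm.nnnorm.coe_nnreal_ennreal).pow_const p
    have hGGfin : ∫⁻ u, ((‖G u‖₊ : ℝ≥0∞)) ^ p < ⊤ := by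
      refine lt_of_le_of_lt (le_of_eq (lintegral_congr_ae ?_)) hGfin
      filter_upwards [hgG] with u hu
      rw [hu]
    have hbd : ∀ τ : ℝ, 0 < τ → bdryInt a p F τ
        ≤ ENNReal.ofReal s * (ENNReal.ofReal C₀ ^ p * ∫⁻ u, ((‖G u‖₊ : ℝ≥0∞)) ^ p) := by
      intro τ hτ
      set Q : ℝ → ℝ≥0∞ := fun x => ENNReal.ofReal (τ / (Real.pi * (x^2 + τ^2))) with hQ
      have hQm : Measurable Q := by
        apply ENNReal.measurable_ofReal.comp
        fun_prop
      have htrans : ∀ v : ℝ, ∫⁻ u, Q (u - v) = 1 := by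
        intro v
        have hmp := (measurePreserving_add_right (volume : Measure ℝ) (-v)).lintegral_comp hQm
        simp only [sub_eq_add_neg]
        rw [hmp]
        exact poisson_lintegral hτ
      have hQeven : ∀ x y : ℝ, Q (x - y) = Q (y - x) := by
        intro x y
        simp only [hQ]
        rw [show (x - y)^2 = (y - x)^2 by ring]
      -- pointwise bound on F in ℝ≥0∞
      have P1 : ∀ u₀ : ℝ, ((‖F (zetaC a u₀ + (τ:ℂ) * Complex.I)‖₊ : ℝ≥0∞))
          ≤ ENNReal.ofReal C₀ * ∫⁻ u, Q (u - u₀) * ((‖G u‖₊ : ℝ≥0∞)) := by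
        intro u₀
        rw [hF u₀ τ hτ]
        refine le_trans (enorm_integral_le_lintegral_enorm _) ?_
        have hcongr : (∫⁻ u, Q (u - u₀) * ((‖g u‖₊ : ℝ≥0∞)))
            = ∫⁻ u, Q (u - u₀) * ((‖G u‖₊ : ℝ≥0∞)) := by
          apply lintegral_congr_ae
          filter_upwards [hgG] with u hu
          rw [hu]
        rw [← hcongr, ← lintegral_const_mul' _ _ ENNReal.ofReal_ne_top]
        apply lintegral_mono
        intro u
        have hb := integrand_bound hM0 ha g hτ u₀ u
        calc ((‖Kker ((τ:ℂ) * Complex.I) (zetaC a u) (zetaC a u₀) * g u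
              * (1 + Complex.I * Complex.ofReal (deriv a u))‖₊ : ℝ≥0∞))
            = ENNReal.ofReal ‖Kker ((τ:ℂ) * Complex.I) (zetaC a u) (zetaC a u₀) * g u
              * (1 + Complex.I * Complex.ofReal (deriv a u))‖ :=
              (ofReal_norm _).symm
          _ ≤ ENNReal.ofReal (C₀ * (τ / (Real.pi * ((u - u₀)^2 + τ^2))) * ‖g u‖) :=
              ENNReal.ofReal_le_ofReal hb
          _ = ENNReal.ofReal C₀ * (Q (u - u₀) * ((‖g u‖₊ : ℝ≥0∞))) := by
              rw [ENNReal.ofReal_mul (by positivity), ENNReal.ofReal_mul hC₀0,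
                ofReal_norm, enorm_eq_nnnorm, mul_assoc]
      calc bdryInt a p F τ
          = ∫⁻ u₀, ENNReal.ofReal (‖F (zetaC a u₀ + (τ:ℂ) * Complex.I)‖ ^ p * arcDen a u₀) :=
            rfl
        _ ≤ ∫⁻ u₀, ENNReal.ofReal s * ((‖F (zetaC a u₀ + (τ:ℂ) * Complex.I)‖₊ : ℝ≥0∞)) ^ p := by
            apply lintegral_mono
            intro u₀
            beta_reduce
            rw [← enorm_eq_nnnorm, ← ofReal_norm,
              ENNReal.ofReal_rpow_of_nonneg (norm_nonneg _) hp0.le,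
              ← ENNReal.ofReal_mul hs0]
            apply ENNReal.ofReal_le_ofReal
            rw [mul_comm]
            exact mul_le_mul_of_nonneg_right (harc u₀) (Real.rpow_nonneg (norm_nonneg _) p)
        _ = ENNReal.ofReal s * ∫⁻ u₀, ((‖F (zetaC a u₀ + (τ:ℂ) * Complex.I)‖₊ : ℝ≥0∞)) ^ p :=
            lintegral_const_mul' _ _ ENNReal.ofReal_ne_top
        _ ≤ ENNReal.ofReal s * ∫⁻ u₀, ENNReal.ofReal C₀ ^ p
              * (∫⁻ u, Q (u - u₀) * ((‖G u‖₊ : ℝ≥0∞))) ^ p := by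
            apply mul_le_mul_right
            apply lintegral_mono
            intro u₀
            beta_reduce
            rw [← ENNReal.mul_rpow_of_nonneg _ _ hp0.le]
            exact ENNReal.rpow_le_rpow (P1 u₀) hp0.le
        _ = ENNReal.ofReal s * (ENNReal.ofReal C₀ ^ p
              * ∫⁻ u₀, (∫⁻ u, Q (u - u₀) * ((‖G u‖₊ : ℝ≥0∞))) ^ p) := by
            rw [lintegral_const_mul' _ _
              (ENNReal.rpow_ne_top_of_nonneg hp0.le ENNReal.ofReal_ne_top)]
        _ ≤ ENNReal.ofReal s * (ENNReal.ofReal C₀ ^ p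
              * ∫⁻ u₀, ∫⁻ u, Q (u - u₀) * ((‖G u‖₊ : ℝ≥0∞)) ^ p) := by
            apply mul_le_mul_right
            apply mul_le_mul_right
            apply lintegral_mono
            intro u₀
            exact jensen_rpow (hQm.comp (measurable_id.sub_const u₀))
              (hGm.nnnorm.coe_nnreal_ennreal) hp (le_of_eq (htrans u₀))
        _ = ENNReal.ofReal s * (ENNReal.ofReal C₀ ^ p * ∫⁻ u, ((‖G u‖₊ : ℝ≥0∞)) ^ p) := by
            congr 2
            rw [lintegral_lintegral_swap]
            · have hinner : ∀ u : ℝ, ∫⁻ u₀, Q (u - u₀) * ((‖G u‖₊ : ℝ≥0∞)) ^ p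
                  = ((‖G u‖₊ : ℝ≥0∞)) ^ p := by
                intro u
                rw [lintegral_mul_const' _ _
                  (ENNReal.rpow_ne_top_of_nonneg hp0.le ENNReal.coe_ne_top)]
                have : (∫⁻ u₀, Q (u - u₀)) = 1 := by
                  rw [lintegral_congr fun u₀ => hQeven u u₀]
                  exact htrans u
                rw [this, one_mul]
              exact lintegral_congr hinner
            · apply Measurable.aemeasurable
              apply Measurable.mul
              · exact hQm.comp (measurable_snd.sub measurable_fst)
              · exact hHm.comp measurable_snd
    have hfin : ENNReal.ofReal s * (ENNReal.ofReal C₀ ^ p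
        * ∫⁻ u, ((‖G u‖₊ : ℝ≥0∞)) ^ p) < ⊤ := by
      apply ENNReal.mul_lt_top ENNReal.ofReal_lt_top
      exact ENNReal.mul_lt_top
        (ENNReal.rpow_lt_top_of_nonneg hp0.le ENNReal.ofReal_ne_top) hGGfin
    refine lt_of_le_of_lt ?_ hfin
    exact iSup₂_le hbd
  · -- g not a.e. strongly measurable : F vanishes on all the shifted curves
    have hzm : Measurable (zetaC a) := by
      have hlip : LipschitzWith M.toNNReal a := by
        apply LipschitzWith.of_dist_le_mul
        intro x y
        rw [Real.dist_eq, Real.dist_eq, Real.coe_toNNReal M hM0]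
        exact ha x y
      exact Complex.measurable_ofReal.add
        ((Complex.measurable_ofReal.comp hlip.continuous.measurable).mul measurable_const)
    have hdm : Measurable (deriv a) := measurable_deriv a
    have hFzero : ∀ τ : ℝ, 0 < τ → ∀ u₀ : ℝ, F (zetaC a u₀ + (τ:ℂ) * Complex.I) = 0 := by
      intro τ hτ u₀
      rw [hF u₀ τ hτ]
      apply integral_non_aestronglyMeasurable
      intro hsm
      apply hmg
      have hKm : Measurable fun u => Kker ((τ:ℂ) * Complex.I) (zetaC a u) (zetaC a u₀) := by
        unfold Kker
        apply Measurable.mul measurable_const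
        apply Measurable.div measurable_const
        exact (((hzm.sub_const _).pow_const 2).sub_const _)
      have hcm : Measurable fun u => (1:ℂ) + Complex.I * Complex.ofReal (deriv a u) :=
        measurable_const.add (measurable_const.mul (Complex.measurable_ofReal.comp hdm))
      have hcne : ∀ u : ℝ, (1:ℂ) + Complex.I * Complex.ofReal (deriv a u) ≠ 0 := by
        intro u h0
        have := congrArg Complex.re h0
        simp [Complex.add_re, Complex.mul_re] at this
      have hne : ∀ u : ℝ, Kker ((τ:ℂ) * Complex.I) (zetaC a u) (zetaC a u₀)
          * ((1:ℂ) + Complex.I * Complex.ofReal (deriv a u)) ≠ 0 := fun u =>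
        mul_ne_zero (kker_ne_zero ha hτ u₀ u) (hcne u)
      have hgid : g = fun u => (Kker ((τ:ℂ) * Complex.I) (zetaC a u) (zetaC a u₀) * g u
          * (1 + Complex.I * Complex.ofReal (deriv a u)))
          * (Kker ((τ:ℂ) * Complex.I) (zetaC a u) (zetaC a u₀)
            * ((1:ℂ) + Complex.I * Complex.ofReal (deriv a u)))⁻¹ := by
        funext u
        have h1 := hne u
        exact (eq_mul_inv_iff_mul_eq₀ h1).2 (by ring)
      rw [hgid]
      exact hsm.mul ((hKm.mul hcm).inv.aestronglyMeasurable)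
    have hzero : ∀ τ : ℝ, 0 < τ → bdryInt a p F τ = 0 := by
      intro τ hτ
      rw [bdryInt]
      have hz : ∀ u : ℝ,
          ENNReal.ofReal (‖F (zetaC a u + (τ:ℂ) * Complex.I)‖ ^ p * arcDen a u) = 0 := by
        intro u
        rw [hFzero τ hτ u]
        simp [Real.zero_rpow hp0.ne']
      rw [lintegral_congr hz, lintegral_zero]
    exact lt_of_le_of_lt (iSup₂_le fun τ hτ => le_of_eq (hzero τ hτ)) ENNReal.zero_lt_top
end
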